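/- Let V and W be real vector spaces and let B₀, B₁ : V × V → W be bilinear alternating maps (B_k(x,x) = 0 for all x, k = 0,1). Suppose h : ℕ → V is a sequence such that B₀(h₀, f) = 0 for every f ∈ V (h₀ is a Casimir of B₀), and for every j ∈ ℕ and every f ∈ V one has B₀(h_{j+1}, f) + B₁(h_j, f) = 0 (the Lenard recursion). Then the sequence is in involution with respect to both brackets: B₀(h_i, h_j) = 0 and B₁(h_i, h_j) = 0 for all i, j ∈ ℕ. -/
import Mathlib

lemma lenard_alt_antisymm {V W : Type*} [AddCommGroup V] [Module ℝ V] [AddCommGroup W]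
    [Module ℝ W] (B : V →ₗ[ℝ] V →ₗ[ℝ] W) (hB : ∀ x : V, B x x = 0) (x y : V) :
    B x y = - B y x := by
  have key := hB (x + y)
  simp only [map_add, LinearMap.add_apply, hB, zero_add, add_zero] at key
  exact eq_neg_of_add_eq_zero_right key

/-- The Lenard scheme: if `B₀, B₁` are bilinear alternating brackets,
`h₀` is a Casimir of `B₀`, and the sequence `h` satisfies the Lenard
recursion `B₀(h_{j+1}, ·) + B₁(h_j, ·) = 0`, then all the `h_i` are in
involution with respect to both brackets. -/
theorem lenard_scheme_involution
    {V W : Type*} [AddCommGroup V] [Module ℝ V] [AddCommGroup W] [Module ℝ W]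
    (B₀ B₁ : V →ₗ[ℝ] V →ₗ[ℝ] W)
    (hB₀alt : ∀ x : V, B₀ x x = 0) (hB₁alt : ∀ x : V, B₁ x x = 0)
    (h : ℕ → V)
    (hcas : ∀ f : V, B₀ (h 0) f = 0)
    (hrec : ∀ (j : ℕ) (f : V), B₀ (h (j + 1)) f + B₁ (h j) f = 0) :
    ∀ i j : ℕ, B₀ (h i) (h j) = 0 ∧ B₁ (h i) (h j) = 0 := by
  have hrec' : ∀ (j : ℕ) (f : V), B₀ (h (j + 1)) f = - B₁ (h j) f := by
    intro j f
    exact eq_neg_of_add_eq_zero_left (hrec j f)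
  -- ladder identity
  have ladder : ∀ i j : ℕ, B₀ (h (i + 1)) (h j) = B₀ (h i) (h (j + 1)) := by
    intro i j
    calc B₀ (h (i + 1)) (h j) = - B₁ (h i) (h j) := hrec' i (h j)
      _ = B₁ (h j) (h i) := by
          rw [lenard_alt_antisymm B₁ hB₁alt (h j) (h i)]
      _ = - B₀ (h (j + 1)) (h i) := by
          rw [hrec' j (h i)]; simp
      _ = B₀ (h i) (h (j + 1)) := by
          rw [lenard_alt_antisymm B₀ hB₀alt (h i) (h (j + 1))]
  have main : ∀ i j : ℕ, B₀ (h i) (h j) = 0 := by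
    intro i
    induction i with
    | zero => intro j; exact hcas (h j)
    | succ n ih => intro j; rw [ladder n j]; exact ih (j + 1)
  intro i j
  refine ⟨main i j, ?_⟩
  have := hrec' i (h j)
  rw [main (i + 1) j] at this
  exact (neg_eq_zero.mp this.symm)
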